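/- Let S_j for j = 2,…,s denote the matrix Σ_{k=2}^{j} R_k Q_{k,k}^{-1} R_k^* padded with zeros to size N_j, where R_k = (Q_{1,k}; …; Q_{k-1,k}). Then the final accumulated operator S_s equals the sGS operator U D^{-1} U^*. -/
import Mathlib


open Matrix

/-- The part of `U` supported on block column `k` (blocks given by `β`).
Then `Ucol β U k * D⁻¹ * (Ucol β U k)ᵀ` is exactly the padded matrix
`diag(R_k Q_{k,k}⁻¹ R_k^*, 0)`. -/
def Ucol {N s : ℕ} (β : Fin N → Fin s) (U : Matrix (Fin N) (Fin N) ℝ) (k : Fin s) :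
    Matrix (Fin N) (Fin N) ℝ :=
  Matrix.of fun i l => if β l = k then U i l else 0

theorem stmt11 {N s : ℕ} (hs : 2 ≤ s) (β : Fin N → Fin s)
    (Q D U : Matrix (Fin N) (Fin N) ℝ)
    (hQsym : Q.IsSymm) (hD : D.PosDef)
    (hDblock : ∀ i j, β i ≠ β j → D i j = 0)
    (hUupper : ∀ i j, ¬ β i < β j → U i j = 0)
    (hdecomp : Q = U + D + Uᵀ) :
    ∑ k ∈ Finset.univ.erase (⟨0, by omega⟩ : Fin s),
        Ucol β U k * D⁻¹ * (Ucol β U k)ᵀ = U * D⁻¹ * Uᵀ := by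
  have hdet : IsUnit D.det := isUnit_iff_ne_zero.mpr (ne_of_gt hD.det_pos)
  -- D⁻¹ is block diagonal
  have hDinv : ∀ i j, β i ≠ β j → D⁻¹ i j = 0 := by
    set E : Matrix (Fin N) (Fin N) ℝ :=
      Matrix.of (fun i j => if β i = β j then D⁻¹ i j else 0) with hEdef
    have hE : D * E = 1 := by
      ext i j
      simp only [Matrix.mul_apply, hEdef, Matrix.of_apply]
      by_cases h : β i = β j
      · have h1 : ∑ l, D i l * D⁻¹ l j = (1 : Matrix (Fin N) (Fin N) ℝ) i j := by
          rw [← Matrix.mul_apply, Matrix.mul_nonsing_inv D hdet]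
        rw [← h1]
        apply Finset.sum_congr rfl
        intro l _
        by_cases hl : β l = β j
        · simp [hl]
        · have : D i l = 0 := hDblock i l (by
            intro hc; exact hl (by rw [← hc, h]))
          simp [hl, this]
      · have hij : i ≠ j := fun hc => h (by rw [hc])
        rw [Matrix.one_apply_ne hij]
        apply Finset.sum_eq_zero
        intro l _
        by_cases hl : β l = β j
        · have : D i l = 0 := hDblock i l (by rw [hl]; exact h)
          simp [this]
        · simp [hl]
    intro i j hij
    have hEinv : D⁻¹ = E := Matrix.inv_eq_right_inv hE
    rw [hEinv, hEdef]
    simp [hij]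
  ext i j
  simp only [Matrix.sum_apply, Matrix.mul_apply, Matrix.transpose_apply, Ucol,
    Matrix.of_apply]
  rw [Finset.sum_comm]
  apply Finset.sum_congr rfl
  intro m _
  by_cases hm : β m = (⟨0, by omega⟩ : Fin s)
  · have hU : U j m = 0 := hUupper j m (by rw [hm]; exact fun hc => absurd hc (by
      simp [Fin.lt_def]))
    rw [hU, mul_zero]
    apply Finset.sum_eq_zero
    intro k hk
    have hk0 : k ≠ (⟨0, by omega⟩ : Fin s) := (Finset.mem_erase.mp hk).1
    have : ¬ β m = k := fun hc => hk0 (by rw [← hc, hm])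
    simp [this]
  · rw [Finset.sum_eq_single (β m)]
    · simp only [if_pos rfl]
      congr 1
      apply Finset.sum_congr rfl
      intro l _
      by_cases hl : β l = β m
      · simp [hl]
      · simp [hl, hDinv l m hl]
    · intro k _ hk
      have : ¬ β m = k := fun hc => hk hc.symm
      simp [this]
    · intro h
      exact absurd (Finset.mem_erase.mpr ⟨hm, Finset.mem_univ _⟩) h
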